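/- (Quadratic flux: one-dimensional component of recovered flux) Let x ∈ ℝ and define g(t) = (2/√π)·(x²·√t + (2/3)·t^{3/2}) for t ≥ 0. Then for every t > 0, g(t)/√(πt) + ∫₀ᵗ (g(t) − g(s))/(√(4π)·(t−s)^{3/2}) ds = x² + t. -/

import Mathlib

open Real MeasureTheory Set Filter Topology

/-- (Quadratic flux: one-dimensional component of recovered flux) Applying the
one-dimensional temperature-to-flux formula to the temperature history
`g t = (2/√π)(x²√t + (2/3)t^{3/2})` produced by the quadratic flux yields
`x² + t`. -/
theorem quadratic_flux_one_dimensional_component (x : ℝ)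
    (g : ℝ → ℝ)
    (hg : ∀ t, 0 ≤ t → g t = 2 / Real.sqrt π * (x ^ 2 * Real.sqrt t + 2 / 3 * t ^ ((3:ℝ)/2))) :
    ∀ t : ℝ, 0 < t →
      g t / Real.sqrt (π * t)
        + ∫ s in Ioo (0:ℝ) t, (g t - g s) / (Real.sqrt (4 * π) * (t - s) ^ ((3:ℝ)/2))
      = x ^ 2 + t := by
  intro t ht
  have hπ : (0:ℝ) < π := Real.pi_pos
  have hsqπ : (0:ℝ) < Real.sqrt π := Real.sqrt_pos.mpr hπ
  have hππ : Real.sqrt π * Real.sqrt π = π := Real.mul_self_sqrt hπ.le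
  have hst : (0:ℝ) < Real.sqrt t := Real.sqrt_pos.mpr ht
  have htt : Real.sqrt t * Real.sqrt t = t := Real.mul_self_sqrt ht.le
  have h32 : ∀ a : ℝ, 0 ≤ a → a ^ ((3:ℝ)/2) = a * Real.sqrt a := by
    intro a ha
    rw [show (3:ℝ)/2 = 1 + 1/2 by norm_num, Real.rpow_add' ha (by norm_num),
      Real.rpow_one, ← Real.sqrt_eq_rpow]
  have h4π : Real.sqrt (4*π) = 2 * Real.sqrt π := by
    rw [show (4:ℝ)*π = 2^2*π by norm_num, Real.sqrt_mul (by positivity),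
      Real.sqrt_sq (by norm_num)]
  -- simplified integrand
  set φ : ℝ → ℝ := fun s =>
    (x^2 + 2/3*(t + Real.sqrt t * Real.sqrt s + s)) / ((Real.sqrt t + Real.sqrt s) * π)
      / Real.sqrt (t - s) with hφdef
  -- Step A : the integrand equals φ on Ioo 0 t
  have hEq : EqOn (fun s => (g t - g s) / (Real.sqrt (4 * π) * (t - s) ^ ((3:ℝ)/2))) φ
      (Ioo 0 t) := by
    intro s hs
    obtain ⟨hs0, hstt⟩ := hs
    have hts : (0:ℝ) < t - s := by linarith
    have hss : (0:ℝ) ≤ Real.sqrt s := Real.sqrt_nonneg s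
    simp only [hφdef]
    rw [hg t ht.le, hg s hs0.le, h32 t ht.le, h32 s hs0.le, h32 (t-s) hts.le, h4π]
    set a := Real.sqrt s with hadef
    set b := Real.sqrt t with hbdef
    set c := Real.sqrt (t-s) with hcdef
    have ea : a*a = s := Real.mul_self_sqrt hs0.le
    have ec : (0:ℝ) < c := Real.sqrt_pos.mpr hts
    have hb0 : (0:ℝ) < b := hst
    rw [div_eq_div_iff (by positivity) (by positivity)]
    rw [show t = b*b from htt.symm, show s = a*a from ea.symm]
    field_simp
    generalize Real.sqrt π = p at hππ ⊢
    rw [← hππ]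
    ring
  rw [setIntegral_congr_fun measurableSet_Ioo hEq]
  -- the antiderivative
  set F : ℝ → ℝ := fun s =>
    (x^2*(2*((Real.sqrt t - Real.sqrt s)/Real.sqrt (t-s)) + 2*Real.arcsin (Real.sqrt s/Real.sqrt t))
      + 2/3*(2*((t*Real.sqrt t - s*Real.sqrt s)/Real.sqrt (t-s))
        + 3*t*Real.arcsin (Real.sqrt s/Real.sqrt t) - 3*(Real.sqrt s*Real.sqrt (t-s))))/π
    with hFdef
  have hderiv : ∀ s ∈ Ioo (0:ℝ) t, HasDerivAt F (φ s) s := by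
    intro s hs
    obtain ⟨hs0, hstt⟩ := hs
    have hts : (0:ℝ) < t - s := by linarith
    have has : (0:ℝ) < Real.sqrt s := Real.sqrt_pos.mpr hs0
    have hcs : (0:ℝ) < Real.sqrt (t-s) := Real.sqrt_pos.mpr hts
    -- derivative of arcsin (√s/√t)
    have hu : HasDerivAt (fun y : ℝ => Real.sqrt y / Real.sqrt t)
        (1/(2*Real.sqrt s)/Real.sqrt t) s := (Real.hasDerivAt_sqrt hs0.ne').div_const _
    have h1 : Real.sqrt s / Real.sqrt t ≠ -1 := by
      have : (0:ℝ) < Real.sqrt s / Real.sqrt t := div_pos has hst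
      intro h; rw [h] at this; linarith
    have h2 : Real.sqrt s / Real.sqrt t ≠ 1 := by
      have : Real.sqrt s / Real.sqrt t < 1 :=
        (div_lt_one hst).mpr (Real.sqrt_lt_sqrt hs0.le hstt)
      exact ne_of_lt this
    have hA : HasDerivAt (fun y : ℝ => Real.arcsin (Real.sqrt y / Real.sqrt t))
        (1/(2*Real.sqrt s*Real.sqrt (t-s))) s := by
      have := (Real.hasDerivAt_arcsin h1 h2).comp s hu
      refine this.congr_deriv (Eq.symm ?_)
      have e1 : 1 - (Real.sqrt s / Real.sqrt t)^2 = (t-s)/t := by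
        rw [div_pow, Real.sq_sqrt hs0.le, Real.sq_sqrt ht.le]
        field_simp
      rw [e1, Real.sqrt_div hts.le]
      field_simp
    -- derivative of √(t-·)
    have hc : HasDerivAt (fun y : ℝ => Real.sqrt (t - y)) (-(1/(2*Real.sqrt (t-s)))) s := by
      have h0 : HasDerivAt (fun y : ℝ => t - y) (-1) s := (hasDerivAt_id s).const_sub t
      have := (Real.hasDerivAt_sqrt hts.ne').comp s h0
      refine this.congr_deriv (Eq.symm ?_)
      ring
    -- derivative of √·
    have hsq : HasDerivAt (fun y : ℝ => Real.sqrt y) (1/(2*Real.sqrt s)) s :=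
      Real.hasDerivAt_sqrt hs0.ne'
    -- piece 1
    have hn1 : HasDerivAt (fun y : ℝ => Real.sqrt t - Real.sqrt y) (-(1/(2*Real.sqrt s))) s := by
      exact hsq.const_sub (Real.sqrt t)
    have hd1 := hn1.div hc hcs.ne'
    -- piece 2
    have hn2 : HasDerivAt (fun y : ℝ => t*Real.sqrt t - y*Real.sqrt y)
        (-(1*Real.sqrt s + s*(1/(2*Real.sqrt s)))) s := by
      exact ((hasDerivAt_id' s).mul hsq).const_sub (t*Real.sqrt t)
    have hd2 := hn2.div hc hcs.ne'
    -- piece 3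
    have hd3 := hsq.mul hc
    have hB1 := (hd1.const_mul (2:ℝ)).add (hA.const_mul (2:ℝ))
    have hB2 := ((hd2.const_mul (2:ℝ)).add (hA.const_mul (3*t))).sub
      (hd3.const_mul (3:ℝ))
    have hF := ((hB1.const_mul (x^2)).add (hB2.const_mul (2/3 : ℝ))).div_const π
    refine hF.congr_deriv (Eq.symm ?_)
    simp only [hφdef]
    set a := Real.sqrt s with hadef
    set b := Real.sqrt t with hbdef
    set c := Real.sqrt (t-s) with hcdef
    have ea : a*a = s := Real.mul_self_sqrt hs0.le
    have ec : c*c = t - s := Real.mul_self_sqrt hts.le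
    have hT2 : t = a*a + c*c := by linarith [ea, ec]
    have hb2 : b*b = a*a + c*c := htt.trans hT2
    rw [show s = a*a from ea.symm, hT2]
    field_simp
    linear_combination (-3*a*x^2 - 2*a*(a^2+c^2)) * hb2
  -- continuity helpers
  have csq : Continuous fun s : ℝ => Real.sqrt s := Real.continuous_sqrt
  have cts : Continuous fun s : ℝ => Real.sqrt (t - s) :=
    Real.continuous_sqrt.comp (continuous_const.sub continuous_id)
  have harc : Continuous fun s : ℝ => Real.arcsin (Real.sqrt s / Real.sqrt t) :=
    Real.continuous_arcsin.comp (csq.div_const _)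
  -- integrability
  have hρcont : Continuous (fun s : ℝ =>
      (x^2 + 2/3*(t + Real.sqrt t * Real.sqrt s + s)) / ((Real.sqrt t + Real.sqrt s) * π)) := by
    apply Continuous.div
    · exact continuous_const.add (continuous_const.mul
        ((continuous_const.add (continuous_const.mul csq)).add continuous_id))
    · exact (continuous_const.add csq).mul continuous_const
    · intro s
      have : (0:ℝ) < Real.sqrt t + Real.sqrt s := by positivity
      positivity
  obtain ⟨C, hC⟩ := (isCompact_Icc (a := (0:ℝ)) (b := t)).exists_bound_of_continuousOn
    hρcont.continuousOn
  have hC0 : 0 ≤ C := le_trans (norm_nonneg _) (hC 0 ⟨le_refl 0, ht.le⟩)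
  have hψ : IntervalIntegrable (fun s => C * (t-s) ^ (-(1/2) : ℝ)) volume 0 t := by
    have h := (intervalIntegral.intervalIntegrable_rpow' (a := t) (b := 0)
      (r := (-(1/2) : ℝ)) (by norm_num)).comp_sub_left t
    simpa using h.const_mul C
  have hmeas : Measurable φ := by
    apply Measurable.div
    · apply Measurable.div
      · exact (measurable_const.add (measurable_const.mul
          ((measurable_const.add (measurable_const.mul csq.measurable)).add measurable_id)))
      · exact ((measurable_const.add csq.measurable).mul measurable_const)
    · exact cts.measurable
  have hint : IntervalIntegrable φ volume 0 t := by
    apply hψ.mono_fun (hmeas.aestronglyMeasurable)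
    rw [Set.uIoc_of_le ht.le]
    refine (ae_restrict_iff' measurableSet_Ioc).mpr (Filter.Eventually.of_forall ?_)
    intro s hs
    have hts0 : (0:ℝ) ≤ t - s := by linarith [hs.2]
    have key : ((t-s) ^ (-(1/2) : ℝ)) = (Real.sqrt (t-s))⁻¹ := by
      rw [Real.rpow_neg hts0, ← Real.sqrt_eq_rpow]
    have hψval : ‖C * (t-s) ^ (-(1/2) : ℝ)‖ = C / Real.sqrt (t-s) := by
      rw [Real.norm_eq_abs, abs_of_nonneg (by positivity), key, div_eq_mul_inv]
    have hφval : ‖φ s‖ = ‖(x^2 + 2/3*(t + Real.sqrt t * Real.sqrt s + s)) /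
        ((Real.sqrt t + Real.sqrt s) * π)‖ / Real.sqrt (t-s) := by
      simp only [hφdef]
      rw [norm_div]
      congr 1
      rw [Real.norm_eq_abs, abs_of_nonneg (Real.sqrt_nonneg _)]
    show ‖φ s‖ ≤ ‖C * (t-s) ^ (-(1/2) : ℝ)‖
    rw [hφval, hψval]
    rcases eq_or_lt_of_le hs.2 with h | h
    · simp [h]
    · have : (0:ℝ) < Real.sqrt (t-s) := Real.sqrt_pos.mpr (by linarith)
      exact (div_le_div_iff_of_pos_right this).mpr (hC s ⟨hs.1.le, hs.2⟩)
  -- limit at 0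
  have hF0 : Tendsto F (𝓝[>] (0:ℝ)) (𝓝 ((2*x^2 + 4/3*t)/π)) := by
    have h1 : ContinuousAt (fun s : ℝ => (Real.sqrt t - Real.sqrt s)/Real.sqrt (t-s)) 0 :=
      ContinuousAt.div ((continuous_const.sub csq).continuousAt) cts.continuousAt
        (by simpa using hst.ne')
    have h2 : ContinuousAt (fun s : ℝ =>
        (t*Real.sqrt t - s*Real.sqrt s)/Real.sqrt (t-s)) 0 :=
      ContinuousAt.div ((continuous_const.sub (continuous_id.mul csq)).continuousAt)
        cts.continuousAt (by simpa using hst.ne')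
    have h3 : Continuous fun s : ℝ => Real.sqrt s * Real.sqrt (t-s) := csq.mul cts
    have hcont : ContinuousAt F 0 :=
      ((((h1.const_mul 2).add (harc.continuousAt.const_mul 2)).const_mul (x^2)).add
        ((((h2.const_mul 2).add (harc.continuousAt.const_mul (3*t))).sub
          (h3.continuousAt.const_mul 3)).const_mul (2/3))).div_const π
    have hval : F 0 = (2*x^2 + 4/3*t)/π := by
      simp only [hFdef, Real.sqrt_zero, sub_zero, Real.arcsin_zero, mul_zero, zero_mul,
        div_zero, zero_div]
      rw [div_self hst.ne', mul_div_assoc, div_self hst.ne']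
      ring
    rw [← hval]
    exact hcont.continuousWithinAt
  -- limit at t
  have hFt : Tendsto F (𝓝[<] t) (𝓝 (x^2 + t)) := by
    set G : ℝ → ℝ := fun s =>
      (x^2*(2*(Real.sqrt (t-s)/(Real.sqrt t + Real.sqrt s)) + 2*Real.arcsin (Real.sqrt s/Real.sqrt t))
        + 2/3*(2*((Real.sqrt (t-s)*(t + Real.sqrt t*Real.sqrt s + s))/(Real.sqrt t + Real.sqrt s))
          + 3*t*Real.arcsin (Real.sqrt s/Real.sqrt t) - 3*(Real.sqrt s*Real.sqrt (t-s))))/π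
      with hGdef
    have hGne : ∀ s : ℝ, Real.sqrt t + Real.sqrt s ≠ 0 := by
      intro s
      have : (0:ℝ) < Real.sqrt t + Real.sqrt s := by positivity
      exact this.ne'
    have q1 : Continuous fun s : ℝ => Real.sqrt (t-s)/(Real.sqrt t + Real.sqrt s) :=
      cts.div (continuous_const.add csq) hGne
    have q2 : Continuous fun s : ℝ =>
        (Real.sqrt (t-s)*(t + Real.sqrt t*Real.sqrt s + s))/(Real.sqrt t + Real.sqrt s) :=
      (cts.mul ((continuous_const.add (continuous_const.mul csq)).add continuous_id)).div
        (continuous_const.add csq) hGne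
    have hGcont : Continuous G :=
      ((continuous_const.mul ((continuous_const.mul q1).add (continuous_const.mul harc))).add
        (continuous_const.mul (((continuous_const.mul q2).add
          (continuous_const.mul harc)).sub (continuous_const.mul (csq.mul cts))))).div_const π
    have hGval : G t = x^2 + t := by
      simp only [hGdef, sub_self, Real.sqrt_zero, zero_div, zero_mul, mul_zero, zero_add,
        div_self hst.ne', Real.arcsin_one]
      field_simp
      ring
    have hFG : EqOn F G (Ioo 0 t) := by
      intro s hs
      obtain ⟨hs0, hstt⟩ := hs
      have hts : (0:ℝ) < t - s := by linarith
      have e1 : (Real.sqrt t - Real.sqrt s)/Real.sqrt (t-s)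
          = Real.sqrt (t-s)/(Real.sqrt t + Real.sqrt s) := by
        rw [div_eq_div_iff (Real.sqrt_pos.mpr hts).ne' (hGne s)]
        linear_combination Real.mul_self_sqrt ht.le - Real.mul_self_sqrt hs0.le
          - Real.mul_self_sqrt hts.le
      have e2 : (t*Real.sqrt t - s*Real.sqrt s)/Real.sqrt (t-s)
          = (Real.sqrt (t-s)*(t + Real.sqrt t*Real.sqrt s + s))/(Real.sqrt t + Real.sqrt s) := by
        rw [div_eq_div_iff (Real.sqrt_pos.mpr hts).ne' (hGne s)]
        linear_combination t * Real.mul_self_sqrt ht.le - s * Real.mul_self_sqrt hs0.le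
          - (t + Real.sqrt t*Real.sqrt s + s) * Real.mul_self_sqrt hts.le
      simp only [hFdef, hGdef, e1, e2]
    have hGt : Tendsto G (𝓝[<] t) (𝓝 (x^2 + t)) := by
      rw [← hGval]
      exact hGcont.continuousAt.continuousWithinAt
    refine hGt.congr' ?_
    filter_upwards [Ioo_mem_nhdsLT_of_mem (show t ∈ Ioc (0:ℝ) t from ⟨ht, le_refl t⟩)] with s hs
    exact (hFG hs).symm
  -- FTC
  have hI : ∫ s in (0:ℝ)..t, φ s = (x^2 + t) - (2*x^2 + 4/3*t)/π :=
    intervalIntegral.integral_eq_sub_of_hasDerivAt_of_tendsto ht hderiv hint hF0 hFt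
  have hgt : g t / Real.sqrt (π*t) = (2*x^2 + 4/3*t)/π := by
    rw [hg t ht.le, h32 t ht.le, Real.sqrt_mul hπ.le,
      div_eq_div_iff (by positivity) hπ.ne']
    field_simp
    generalize Real.sqrt π = p at hππ ⊢
    rw [← hππ]
    ring
  rw [← MeasureTheory.integral_Ioc_eq_integral_Ioo, ← intervalIntegral.integral_of_le ht.le,
    hI, hgt]
  ring
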